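/- With the same setup (Eve's states from a Pauli channel with error distribution $P$), for every $y \in \mathbb{F}_2^l$: $F\big({\cal E}_E(|y\rangle\langle y|),\; 2^{-l}\sum_{y'} {\cal E}_E(|y'\rangle\langle y'|)\big) \geq 1 - P_{ph}$. -/

import Mathlib

open Matrix
open scoped ComplexOrder

open Classical in
/-- The positive-semidefinite square root of a matrix (junk value `0` off the PSD cone). -/
noncomputable def msqrt {ι : Type*} [Fintype ι] [DecidableEq ι]
    (A : Matrix ι ι ℂ) : Matrix ι ι ℂ :=
  if h : A.PosSemidef then
    (h.1.eigenvectorUnitary : Matrix ι ι ℂ) *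
      diagonal ((↑) ∘ (fun x : ℝ => √x) ∘ h.1.eigenvalues) *
      (star (h.1.eigenvectorUnitary : Matrix ι ι ℂ))
  else 0

/-- The Uhlmann fidelity `F(ρ, ρ') = Tr √(√ρ' ρ √ρ')`. -/
noncomputable def fidelity {ι : Type*} [Fintype ι] [DecidableEq ι]
    (ρ ρ' : Matrix ι ι ℂ) : ℝ :=
  ((msqrt (msqrt ρ' * ρ * msqrt ρ')).trace).re

/-- The marginal `P(x) = ∑ z P(x, z)`. -/
noncomputable def margP (l : ℕ)
    (P : (Fin l → ZMod 2) × (Fin l → ZMod 2) → ℝ) (x : Fin l → ZMod 2) : ℝ :=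
  ∑ z, P (x, z)

/-- Eve's vector `|P,y,x⟩ = ∑ z (-1)^{z·y} √(P(z|x)) |(x,z)⟩`. -/
noncomputable def eveKet (l : ℕ)
    (P : (Fin l → ZMod 2) × (Fin l → ZMod 2) → ℝ)
    (y x : Fin l → ZMod 2) :
    ((Fin l → ZMod 2) × (Fin l → ZMod 2)) → ℂ :=
  fun w =>
    if w.1 = x then
      (-1 : ℂ) ^ ((w.2 ⬝ᵥ y : ZMod 2)).val *
        (Real.sqrt (P (x, w.2) / margP l P x) : ℝ)
    else 0

/-- Eve's state `ρ_y = ∑ x P(x) |P,y,x⟩⟨P,y,x|` after Alice sends `|y⟩` in the `+`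
basis through a Pauli channel with error distribution `P`. -/
noncomputable def eveState (l : ℕ)
    (P : (Fin l → ZMod 2) × (Fin l → ZMod 2) → ℝ)
    (y : Fin l → ZMod 2) :
    Matrix ((Fin l → ZMod 2) × (Fin l → ZMod 2))
      ((Fin l → ZMod 2) × (Fin l → ZMod 2)) ℂ :=
  ∑ x, (margP l P x : ℂ) • Matrix.vecMulVec (eveKet l P y x) (star (eveKet l P y x))


noncomputable def eps (l : ℕ) (y z : Fin l → ZMod 2) : ℂ :=
  (-1) ^ ((z ⬝ᵥ y : ZMod 2)).val

lemma eps_mul_self (l : ℕ) (y z : Fin l → ZMod 2) : eps l y z * eps l y z = 1 := by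
  rw [eps, ← mul_pow]; norm_num

lemma star_eps (l : ℕ) (y z : Fin l → ZMod 2) : star (eps l y z) = eps l y z := by
  rw [eps, star_pow]; norm_num

lemma neg_one_pow_add (s t : ZMod 2) :
    (-1 : ℂ) ^ (s + t).val = (-1) ^ s.val * (-1) ^ t.val := by
  have h : ∀ u : ZMod 2, u = 0 ∨ u = 1 := by decide
  rcases h s with hs | hs <;> rcases h t with ht | ht <;> subst hs <;> subst ht <;>
    norm_num [show ((0:ZMod 2) + 0).val = 0 from rfl, show ((0:ZMod 2) + 1).val = 1 from rfl,
      show ((1:ZMod 2) + 0).val = 1 from rfl, show ((1:ZMod 2) + 1).val = 0 from rfl, show ((2:ZMod 2)).val = 0 from rfl,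
      show ((0:ZMod 2)).val = 0 from rfl, show ((1:ZMod 2)).val = 1 from rfl]

lemma neg_one_pow_sum {α : Type*} (s : Finset α) (f : α → ZMod 2) :
    (-1 : ℂ) ^ ((∑ i ∈ s, f i).val) = ∏ i ∈ s, (-1) ^ ((f i).val) := by
  classical
  induction s using Finset.induction with
  | empty => simp [show ((0:ZMod 2)).val = 0 from rfl]
  | insert _ _ h ih =>
      rw [Finset.sum_insert h, Finset.prod_insert h, neg_one_pow_add, ih]

lemma sum_zmod2 (f : ZMod 2 → ℂ) : ∑ t, f t = f 0 + f 1 := by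
  have : (Finset.univ : Finset (ZMod 2)) = {0, 1} := by decide
  rw [this, Finset.sum_insert (by decide), Finset.sum_singleton]

lemma sum_eps (l : ℕ) (a : Fin l → ZMod 2) :
    ∑ y' : Fin l → ZMod 2, (-1 : ℂ) ^ ((a ⬝ᵥ y' : ZMod 2)).val
      = if a = 0 then (2 : ℂ) ^ l else 0 := by
  classical
  have h1 : ∀ y' : Fin l → ZMod 2, (-1 : ℂ) ^ ((a ⬝ᵥ y' : ZMod 2)).val
      = ∏ i, (-1 : ℂ) ^ ((a i * y' i).val) := fun y' => by
    rw [dotProduct, neg_one_pow_sum]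
  simp_rw [h1]
  have key := Finset.prod_univ_sum (fun _ : Fin l => (Finset.univ : Finset (ZMod 2)))
    (fun i t => (-1 : ℂ) ^ ((a i * t).val))
  rw [← Fintype.piFinset_univ, ← key]
  have h2 : ∀ i, (∑ t : ZMod 2, (-1 : ℂ) ^ ((a i * t).val))
      = if a i = 0 then 2 else 0 := by
    intro i
    rw [sum_zmod2]
    have h : a i = 0 ∨ a i = 1 := by
      have : ∀ u : ZMod 2, u = 0 ∨ u = 1 := by decide
      exact this _
    rcases h with h | h <;> rw [h] <;>
      norm_num [show ((0:ZMod 2)).val = 0 from rfl, show ((1:ZMod 2)).val = 1 from rfl,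
        show ((1:ZMod 2) * 0).val = 0 from rfl, show ((1:ZMod 2) * 1).val = 1 from rfl]
  simp_rw [h2]
  by_cases h : a = 0
  · subst h; simp
  · obtain ⟨i, hi⟩ : ∃ i, a i ≠ 0 := by
      by_contra hc; push_neg at hc; exact h (funext hc)
    rw [if_neg h]
    exact Finset.prod_eq_zero (Finset.mem_univ i) (by simp [hi])

lemma key_real {a b m : ℝ} (ha : 0 ≤ a) (hb : 0 ≤ b) (hm : 0 ≤ m) (hma : m = 0 → a = 0) :
    m * (Real.sqrt (a / m) * Real.sqrt (b / m)) = Real.sqrt a * Real.sqrt b := by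
  rcases eq_or_lt_of_le hm with h | h
  · rw [← h, hma h.symm]; simp
  · rw [Real.sqrt_div ha, Real.sqrt_div hb, div_mul_div_comm,
      Real.mul_self_sqrt h.le, mul_comm, div_mul_cancel₀ _ (ne_of_gt h)]

lemma eveState_apply (l : ℕ) (P : (Fin l → ZMod 2) × (Fin l → ZMod 2) → ℝ)
    (hP0 : ∀ w, 0 ≤ P w) (y : Fin l → ZMod 2) (w w' : (Fin l → ZMod 2) × (Fin l → ZMod 2)) :
    eveState l P y w w' =
      if w.1 = w'.1 then
        eps l y w.2 * eps l y w'.2 * ((Real.sqrt (P w) : ℂ) * (Real.sqrt (P w') : ℂ))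
      else 0 := by
  classical
  have hm : ∀ x, 0 ≤ margP l P x := fun x => Finset.sum_nonneg fun z _ => hP0 _
  have hm0 : ∀ x z, margP l P x = 0 → P (x, z) = 0 := by
    intro x z h
    have := (Finset.sum_eq_zero_iff_of_nonneg (fun z _ => hP0 (x, z))).mp h z (Finset.mem_univ z)
    exact this
  rw [eveState]
  rw [Matrix.sum_apply]
  by_cases h : w.1 = w'.1
  · rw [Finset.sum_eq_single w.1]
    · simp only [Matrix.smul_apply, Matrix.vecMulVec_apply, Pi.star_apply, eveKet,
        if_pos rfl, if_pos h.symm, smul_eq_mul, if_pos h]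
      rw [star_mul']
      rw [show star ((-1 : ℂ) ^ ((w'.2 ⬝ᵥ y : ZMod 2)).val) = eps l y w'.2 from star_eps l y w'.2]
      rw [Complex.star_def, Complex.conj_ofReal]
      have hr : (margP l P w.1 : ℂ) * ((Real.sqrt (P (w.1, w.2) / margP l P w.1) : ℝ) *
          (Real.sqrt (P (w.1, w'.2) / margP l P w.1) : ℝ)) =
          ((Real.sqrt (P (w.1, w.2)) * Real.sqrt (P (w.1, w'.2)) : ℝ) : ℂ) := by
        push_cast
        rw [← Complex.ofReal_mul, ← Complex.ofReal_mul, ← Complex.ofReal_mul]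
        exact_mod_cast congrArg (Complex.ofReal)
          (key_real (hP0 _) (hP0 _) (hm w.1) (hm0 w.1 w.2))
      have hw : (w.1, w.2) = w := rfl
      have hw' : (w.1, w'.2) = w' := by rw [h]
      rw [eps, eps]
      push_cast
      rw [show P (w.1, w.2) = P w by rw [hw], show P (w.1, w'.2) = P w' by rw [hw']] at hr ⊢
      push_cast at hr
      linear_combination ((-1 : ℂ) ^ (w.2 ⬝ᵥ y).val * (-1) ^ (w'.2 ⬝ᵥ y).val) * hr

    · intro x _ hx
      simp [Matrix.smul_apply, Matrix.vecMulVec_apply, eveKet, Ne.symm hx]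
    · simp
  · rw [if_neg h]
    refine Finset.sum_eq_zero fun x _ => ?_
    simp only [Matrix.smul_apply, Matrix.vecMulVec_apply, Pi.star_apply, eveKet, smul_eq_mul]
    by_cases hx : w.1 = x
    · have : ¬ w'.1 = x := fun hc => h (hx.trans hc.symm)
      simp [this]
    · simp [hx]

lemma add_eq_zero_iff_pi (l : ℕ) (a b : Fin l → ZMod 2) : a + b = 0 ↔ a = b := by
  have h : ∀ s t : ZMod 2, s + t = 0 ↔ s = t := by decide
  constructor
  · intro hab; funext i; exact (h _ _).mp (congrFun hab i)
  · rintro rfl; funext i; exact (h (a i) (a i)).mpr rfl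

lemma avg_eq (l : ℕ) (P : (Fin l → ZMod 2) × (Fin l → ZMod 2) → ℝ)
    (hP0 : ∀ w, 0 ≤ P w) :
    (((2 : ℂ) ^ l)⁻¹) • ∑ y', eveState l P y' =
      Matrix.diagonal (fun w => (P w : ℂ)) := by
  classical
  ext w w'
  rw [Matrix.smul_apply, Matrix.sum_apply]
  simp_rw [eveState_apply l P hP0]
  by_cases h : w.1 = w'.1
  · simp_rw [if_pos h]
    have key : ∀ y' : Fin l → ZMod 2, eps l y' w.2 * eps l y' w'.2 *
        ((Real.sqrt (P w) : ℂ) * (Real.sqrt (P w') : ℂ))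
        = (-1 : ℂ) ^ (((w.2 + w'.2) ⬝ᵥ y' : ZMod 2)).val *
          ((Real.sqrt (P w) : ℂ) * (Real.sqrt (P w') : ℂ)) := by
      intro y'
      rw [eps, eps, add_dotProduct, neg_one_pow_add]
    simp_rw [key]
    rw [← Finset.sum_mul, sum_eps]
    by_cases h2 : w.2 = w'.2
    · have hww : w = w' := Prod.ext h h2
      subst hww
      rw [if_pos ((add_eq_zero_iff_pi l _ _).mpr rfl), Matrix.diagonal_apply_eq]
      rw [smul_eq_mul, ← Complex.ofReal_mul, Real.mul_self_sqrt (hP0 w), ← mul_assoc,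
        inv_mul_cancel₀ (by positivity), one_mul]
    · have hz : ¬ (w.2 + w'.2 = 0) := fun hc => h2 ((add_eq_zero_iff_pi l _ _).mp hc)
      rw [if_neg hz, Matrix.diagonal_apply_ne _ (fun hc => h2 (by rw [hc]))]
      simp
  · simp_rw [if_neg h]
    rw [Matrix.diagonal_apply_ne _ (fun hc => h (by rw [hc]))]
    simp

lemma msqrt_eq {ι : Type*} [Fintype ι] [DecidableEq ι] {A B : Matrix ι ι ℂ}
    (hB : B.PosSemidef) (hAB : B ^ 2 = A) : msqrt A = B := by
  have hA : A.PosSemidef := hAB ▸ hB.pow 2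
  rw [msqrt, dif_pos hA]
  open MatrixOrder in
  have h1 : (hA.1.eigenvectorUnitary : Matrix ι ι ℂ) *
      diagonal ((↑) ∘ (fun x : ℝ => √x) ∘ hA.1.eigenvalues) *
      (star (hA.1.eigenvectorUnitary : Matrix ι ι ℂ)) = cfc Real.sqrt A := by
    rw [hA.1.cfc_eq]; simp [Matrix.IsHermitian.cfc]
  open MatrixOrder in
  have hB0 : (0 : Matrix ι ι ℂ) ≤ B := Matrix.nonneg_iff_posSemidef.mpr hB
  open MatrixOrder in
  have hA0 : (0 : Matrix ι ι ℂ) ≤ A := Matrix.nonneg_iff_posSemidef.mpr hA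
  open MatrixOrder in
  rw [h1, ← cfcₙ_eq_cfc, ← CFC.sqrt_eq_real_sqrt A hA0, ← hAB, CFC.sqrt_sq B hB0]

lemma msqrt_diagonal {ι : Type*} [Fintype ι] [DecidableEq ι] (f : ι → ℝ)
    (hf : ∀ i, 0 ≤ f i) :
    msqrt (Matrix.diagonal fun i => (f i : ℂ)) =
      Matrix.diagonal fun i => (Real.sqrt (f i) : ℂ) := by
  refine msqrt_eq (.diagonal fun i => Complex.zero_le_real.mpr (Real.sqrt_nonneg _)) ?_
  have h : (fun i => (Real.sqrt (f i) : ℂ) * (Real.sqrt (f i) : ℂ))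
      = fun i => (f i : ℂ) :=
    funext fun i => by rw [← Complex.ofReal_mul, Real.mul_self_sqrt (hf i)]
  rw [pow_two, Matrix.diagonal_mul_diagonal, h]

/-- For every `y`, the fidelity between Eve's state `ρ_y` and the average state
`2^{-l} ∑_{y'} ρ_{y'}` is at least `1 - P_ph`, where `P_ph = 1 - ∑ x P(x, 0)`. -/
theorem fidelity_eveState_avg_ge (l : ℕ)
    (P : (Fin l → ZMod 2) × (Fin l → ZMod 2) → ℝ)
    (hP0 : ∀ w, 0 ≤ P w) (hP1 : ∑ w, P w = 1)
    (y : Fin l → ZMod 2) :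
    fidelity (eveState l P y)
        ((((2 : ℂ) ^ l)⁻¹) • ∑ y', eveState l P y') ≥
      1 - (1 - ∑ x, P (x, 0)) := by
  classical
  set n : (Fin l → ZMod 2) → ℝ := fun x => ∑ z, (P (x, z)) ^ 2 with hn_def
  set c : (Fin l → ZMod 2) → ℝ := fun x => (Real.sqrt (n x))⁻¹ with hc_def
  have hn0 : ∀ x, 0 ≤ n x := fun x => Finset.sum_nonneg fun z _ => sq_nonneg _
  have hc0 : ∀ x, 0 ≤ c x := fun x => inv_nonneg.mpr (Real.sqrt_nonneg _)
  have hnP : ∀ x z, n x = 0 → P (x, z) = 0 := by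
    intro x z h
    have := (Finset.sum_eq_zero_iff_of_nonneg (fun z _ => sq_nonneg (P (x, z)))).mp h z
      (Finset.mem_univ z)
    exact pow_eq_zero_iff (n := 2) (by norm_num) |>.mp this
  set u : (Fin l → ZMod 2) → ((Fin l → ZMod 2) × (Fin l → ZMod 2)) → ℂ :=
    fun x w => if w.1 = x then eps l y w.2 * ((Real.sqrt (c x) * P w : ℝ) : ℂ) else 0
    with hu_def
  set S := ∑ x, Matrix.vecMulVec (u x) (star (u x)) with hS_def
  have hS_apply : ∀ w w', S w w' =
      if w.1 = w'.1 then
        eps l y w.2 * eps l y w'.2 * ((c w.1 * P w * P w' : ℝ) : ℂ)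
      else 0 := by
    intro w w'
    rw [hS_def, Matrix.sum_apply]
    by_cases h : w.1 = w'.1
    · rw [Finset.sum_eq_single w.1, if_pos h]
      · rw [Matrix.vecMulVec_apply, Pi.star_apply, hu_def]
        simp only [eq_self_iff_true, if_true, if_pos h.symm]
        rw [star_mul', show star (eps l y w'.2) = eps l y w'.2 from star_eps l y w'.2,
          Complex.star_def, Complex.conj_ofReal]
        have hcc : Real.sqrt (c w.1) * Real.sqrt (c w.1) = c w.1 :=
          Real.mul_self_sqrt (hc0 _)
        have h2 : ((Real.sqrt (c w.1) * P w : ℝ) : ℂ) * ((Real.sqrt (c w.1) * P w' : ℝ) : ℂ)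
            = ((c w.1 * P w * P w' : ℝ) : ℂ) := by
          rw [← Complex.ofReal_mul]
          exact congrArg Complex.ofReal (by rw [mul_mul_mul_comm, hcc]; ring)
        linear_combination (eps l y w.2 * eps l y w'.2) * h2
      · intro x _ hx
        rw [Matrix.vecMulVec_apply, hu_def]
        simp [Ne.symm hx]
      · simp
    · rw [if_neg h]
      refine Finset.sum_eq_zero fun x _ => ?_
      rw [Matrix.vecMulVec_apply, Pi.star_apply, hu_def]
      by_cases hx : w.1 = x
      · have : ¬ w'.1 = x := fun hc => h (hx.trans hc.symm)
        simp [this]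
      · simp [hx]
  set D := Matrix.diagonal (fun w : (Fin l → ZMod 2) × (Fin l → ZMod 2) =>
      (Real.sqrt (P w) : ℂ)) with hD_def
  have hSpsd : S.PosSemidef := by
    rw [hS_def]
    refine Finset.sum_induction _ _ (fun a b ha hb => ha.add hb) Matrix.PosSemidef.zero ?_
    intro x _
    rw [Matrix.vecMulVec_eq Unit, ← Matrix.conjTranspose_replicateCol]
    exact Matrix.posSemidef_self_mul_conjTranspose _
  have hSsq : S ^ 2 = D * eveState l P y * D := by
    rw [pow_two]
    ext w w'
    rw [Matrix.mul_apply]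
    simp_rw [hS_apply]
    rw [hD_def, Matrix.mul_diagonal, Matrix.diagonal_mul, eveState_apply l P hP0]
    by_cases h : w.1 = w'.1
    · rw [if_pos h, Fintype.sum_prod_type]
      rw [Finset.sum_eq_single w.1]
      · have hPP : c w.1 ^ 2 * (P w * P w') * n w.1 = P w * P w' := by
          rcases eq_or_lt_of_le (hn0 w.1) with h0 | h0
          · have hw : P w = 0 := by
              have : P (w.1, w.2) = 0 := hnP _ _ h0.symm
              simpa using this
            rw [hw, ← h0]; ring
          · have hone : c w.1 ^ 2 * n w.1 = 1 := by
              rw [hc_def]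
              simp only []
              rw [inv_pow, Real.sq_sqrt h0.le, inv_mul_cancel₀ (ne_of_gt h0)]
            linear_combination (P w * P w') * hone
        have hz : ∀ z, (if w.1 = (w.1, z).1 then eps l y w.2 * eps l y (w.1, z).2 *
              ((c w.1 * P w * P (w.1, z) : ℝ) : ℂ) else 0) *
            (if (w.1, z).1 = w'.1 then eps l y (w.1, z).2 * eps l y w'.2 *
              ((c w.1 * P (w.1, z) * P w' : ℝ) : ℂ) else 0)
            = eps l y w.2 * eps l y w'.2 *
              ((c w.1 ^ 2 * (P w * P w') * P (w.1, z) ^ 2 : ℝ) : ℂ) := by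
          intro z
          rw [if_pos rfl, if_pos h]
          have hXY : ((c w.1 * P w * P (w.1, z) : ℝ) : ℂ) *
              ((c w.1 * P (w.1, z) * P w' : ℝ) : ℂ)
              = ((c w.1 ^ 2 * (P w * P w') * P (w.1, z) ^ 2 : ℝ) : ℂ) := by
            rw [← Complex.ofReal_mul]
            exact congrArg Complex.ofReal (by ring)
          calc (eps l y w.2 * eps l y (w.1, z).2 * ((c w.1 * P w * P (w.1, z) : ℝ) : ℂ)) *
                (eps l y (w.1, z).2 * eps l y w'.2 * ((c w.1 * P (w.1, z) * P w' : ℝ) : ℂ))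
              = (eps l y z * eps l y z) * (eps l y w.2 * eps l y w'.2 *
                  (((c w.1 * P w * P (w.1, z) : ℝ) : ℂ) *
                    ((c w.1 * P (w.1, z) * P w' : ℝ) : ℂ))) := by ring
            _ = _ := by rw [eps_mul_self, one_mul, hXY]
        rw [Finset.sum_congr rfl fun z _ => hz z, ← Finset.mul_sum]
        have hsum : (∑ z, ((c w.1 ^ 2 * (P w * P w') * P (w.1, z) ^ 2 : ℝ) : ℂ))
            = ((P w * P w' : ℝ) : ℂ) := by
          rw [← Complex.ofReal_sum]
          refine congrArg Complex.ofReal ?_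
          rw [← Finset.mul_sum]
          exact hPP
        rw [hsum]
        have e1 : (Real.sqrt (P w) : ℂ) * (Real.sqrt (P w) : ℂ) = ((P w : ℝ) : ℂ) := by
          rw [← Complex.ofReal_mul, Real.mul_self_sqrt (hP0 w)]
        have e2 : (Real.sqrt (P w') : ℂ) * (Real.sqrt (P w') : ℂ) = ((P w' : ℝ) : ℂ) := by
          rw [← Complex.ofReal_mul, Real.mul_self_sqrt (hP0 w')]
        have e3 : ((P w : ℝ) : ℂ) * ((P w' : ℝ) : ℂ) = ((P w * P w' : ℝ) : ℂ) := by
          rw [← Complex.ofReal_mul]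
        calc eps l y w.2 * eps l y w'.2 * ((P w * P w' : ℝ) : ℂ)
            = ((Real.sqrt (P w) : ℂ) * (Real.sqrt (P w) : ℂ)) *
              ((Real.sqrt (P w') : ℂ) * (Real.sqrt (P w') : ℂ)) *
              (eps l y w.2 * eps l y w'.2) := by rw [e1, e2, mul_comm, ← mul_assoc, e3]; ring
          _ = (Real.sqrt (P w) : ℂ) * (eps l y w.2 * eps l y w'.2 *
              ((Real.sqrt (P w) : ℂ) * (Real.sqrt (P w') : ℂ))) * (Real.sqrt (P w') : ℂ) := by
            ring
      · intro x _ hx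
        refine Finset.sum_eq_zero fun z _ => ?_
        rw [if_neg (show ¬ w.1 = (x, z).1 from Ne.symm hx), zero_mul]
      · simp
    · rw [if_neg h, mul_zero, zero_mul]
      refine Finset.sum_eq_zero fun k _ => ?_
      by_cases hk : w.1 = k.1
      · rw [if_neg (show ¬ k.1 = w'.1 from fun hc => h (hk.trans hc)), mul_zero]
      · rw [if_neg hk, zero_mul]
  have hmsqrtM : msqrt (D * eveState l P y * D) = S := msqrt_eq hSpsd hSsq
  rw [ge_iff_le, show (1 : ℝ) - (1 - ∑ x, P (x, 0)) = ∑ x, P (x, 0) by ring]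
  rw [fidelity, avg_eq l P hP0, msqrt_diagonal P hP0, ← hD_def, hmsqrtM]
  have hcx : ∀ x, c x * n x = Real.sqrt (n x) := by
    intro x
    rw [hc_def]
    simp only []
    rw [inv_mul_eq_div, Real.div_sqrt]
  have htr : S.trace = ((∑ x, Real.sqrt (n x) : ℝ) : ℂ) := by
    rw [Matrix.trace]
    have hdg : ∀ w : (Fin l → ZMod 2) × (Fin l → ZMod 2),
        S.diag w = ((c w.1 * P w ^ 2 : ℝ) : ℂ) := by
      intro w
      rw [Matrix.diag_apply, hS_apply, if_pos rfl]
      calc eps l y w.2 * eps l y w.2 * ((c w.1 * P w * P w : ℝ) : ℂ)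
          = ((c w.1 * P w * P w : ℝ) : ℂ) := by rw [eps_mul_self, one_mul]
        _ = ((c w.1 * P w ^ 2 : ℝ) : ℂ) := congrArg Complex.ofReal (by ring)
    rw [Finset.sum_congr rfl fun w _ => hdg w, ← Complex.ofReal_sum]
    refine congrArg Complex.ofReal ?_
    rw [Fintype.sum_prod_type]
    refine Finset.sum_congr rfl fun x _ => ?_
    rw [← hcx x, hn_def]
    simp only []
    rw [Finset.mul_sum]
  rw [htr, Complex.ofReal_re]
  refine Finset.sum_le_sum fun x _ => ?_
  have h1 : P (x, 0) ^ 2 ≤ n x :=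
    Finset.single_le_sum (f := fun z => P (x, z) ^ 2) (fun z _ => sq_nonneg _)
      (Finset.mem_univ 0)
  calc P (x, 0) = Real.sqrt (P (x, 0) ^ 2) := (Real.sqrt_sq (hP0 _)).symm
    _ ≤ Real.sqrt (n x) := Real.sqrt_le_sqrt h1
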